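/- (Croot–Lev–Pach lemma) Let q be a prime power, let P ∈ F_q[x_1,…,x_n] be a polynomial of total degree at most d, and let M be the q^n × q^n matrix over F_q with rows and columns indexed by F_q^n whose entries are M_{x,y} = P(x + y). Then rank(M) ≤ 2·m_{⌊d/2⌋}(q, n), where m_k(q, n) is the number of monomials in x_1,…,x_n in which each variable appears with individual degree at most q−1 and whose total degree is at most k. -/

import Mathlib

open Finset

def redExp (q k : ℕ) : ℕ := if k = 0 then 0 else (k - 1) % (q - 1) + 1

lemma redExp_le_self (q k : ℕ) : redExp q k ≤ k := by
  unfold redExp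
  split
  · omega
  · have := Nat.mod_le (k - 1) (q - 1); omega

lemma redExp_le (q k : ℕ) (hq : 2 ≤ q) : redExp q k ≤ q - 1 := by
  unfold redExp
  split
  · omega
  · have := Nat.mod_lt (k - 1) (y := q - 1) (by omega); omega

lemma pow_redExp {F : Type} [Field F] [Fintype F] {q : ℕ} (hF : Fintype.card F = q)
    (a : F) (k : ℕ) : a ^ k = a ^ redExp q k := by
  have hq : 2 ≤ q := hF ▸ Fintype.one_lt_card
  rcases eq_or_ne k 0 with rfl | hk
  · simp [redExp]
  rcases eq_or_ne a 0 with rfl | ha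
  · rw [zero_pow hk, zero_pow]; unfold redExp; split <;> omega
  · have h1 : a ^ (q - 1) = 1 := by
      rw [← hF]; exact FiniteField.pow_card_sub_one_eq_one a ha
    have hkey : k = redExp q k + (q - 1) * ((k - 1) / (q - 1)) := by
      have := Nat.div_add_mod (k - 1) (q - 1)
      unfold redExp; split
      · omega
      · omega
    conv_lhs => rw [hkey]
    rw [pow_add, pow_mul, h1, one_pow, mul_one]

lemma one_var_expand {F : Type} [CommRing F] {q m : ℕ} (hm : m < q) (x y : F) :
    (x + y) ^ m = ∑ a : Fin q, ∑ b : Fin q,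
      (if (a : ℕ) + (b : ℕ) = m then (Nat.choose m a : F) else 0) * x ^ (a : ℕ) * y ^ (b : ℕ) := by
  have hinner : ∀ a : Fin q, (∑ b : Fin q,
      (if (a : ℕ) + (b : ℕ) = m then (Nat.choose m a : F) else 0) * x ^ (a : ℕ) * y ^ (b : ℕ))
      = if (a : ℕ) ≤ m then (Nat.choose m a : F) * x ^ (a : ℕ) * y ^ (m - (a : ℕ)) else 0 := by
    intro a
    by_cases ha : (a : ℕ) ≤ m
    · rw [if_pos ha]
      rw [Finset.sum_eq_single (⟨m - (a : ℕ), by omega⟩ : Fin q)]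
      · simp [Nat.add_sub_cancel' ha]
      · intro b _ hb
        rw [if_neg, zero_mul, zero_mul]
        intro hab
        apply hb
        ext
        simp only
        omega
      · simp
    · rw [if_neg ha]
      apply Finset.sum_eq_zero
      intro b _
      rw [if_neg (by omega), zero_mul, zero_mul]
  rw [Finset.sum_congr rfl fun a _ => hinner a]
  have : (∑ a : Fin q, if (a : ℕ) ≤ m then (Nat.choose m a : F) * x ^ (a : ℕ) * y ^ (m - (a : ℕ)) else 0)
      = ∑ k ∈ Finset.range q, if k ≤ m then (Nat.choose m k : F) * x ^ k * y ^ (m - k) else 0 :=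
    Fin.sum_univ_eq_sum_range (fun k => if k ≤ m then (Nat.choose m k : F) * x ^ k * y ^ (m - k) else 0) q
  rw [this, ← Finset.sum_subset (Finset.range_subset_range.2 hm)
    (fun k _ hk => by rw [if_neg (by simp at hk ⊢; omega)])]
  rw [add_pow]
  apply Finset.sum_congr rfl
  intro k hk
  simp only [Finset.mem_range] at hk
  rw [if_pos (by omega)]
  ring

lemma multi_expand {F : Type} [CommRing F] {q n : ℕ} (m : Fin n → ℕ) (hm : ∀ i, m i < q)
    (x y : Fin n → F) :
    ∏ i, (x i + y i) ^ m i = ∑ a : Fin n → Fin q, ∑ b : Fin n → Fin q,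
      (∏ i, (if (a i : ℕ) + (b i : ℕ) = m i then (Nat.choose (m i) (a i) : F) else 0)) *
        (∏ i, x i ^ (a i : ℕ)) * (∏ i, y i ^ (b i : ℕ)) := by
  have h1 : ∏ i, (x i + y i) ^ m i = ∏ i, ∑ a : Fin q, ∑ b : Fin q,
      (if (a : ℕ) + (b : ℕ) = m i then (Nat.choose (m i) a : F) else 0)
        * x i ^ (a : ℕ) * y i ^ (b : ℕ) :=
    Finset.prod_congr rfl fun i _ => one_var_expand (hm i) (x i) (y i)
  rw [h1, Finset.prod_univ_sum]
  rw [Fintype.piFinset_univ]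
  apply Finset.sum_congr rfl
  intro a _
  rw [Finset.prod_univ_sum, Fintype.piFinset_univ]
  apply Finset.sum_congr rfl
  intro b _
  rw [← Finset.prod_mul_distrib, ← Finset.prod_mul_distrib]

section RankLemmas
variable {K ι : Type} [Field K] [Fintype ι]

lemma rank_vecMulVec_le_one (w v : ι → K) : (Matrix.vecMulVec w v).rank ≤ 1 := by
  rw [Matrix.vecMulVec_eq (Fin 1)]
  refine (Matrix.rank_mul_le_left _ _).trans ?_
  exact (Matrix.rank_le_card_width _).trans (by simp)

lemma matrix_rank_add_le [FiniteDimensional K (ι → K)] (A B : Matrix ι ι K) :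
    (A + B).rank ≤ A.rank + B.rank := by
  rw [Matrix.rank, Matrix.rank, Matrix.rank, Matrix.mulVecLin_add]
  refine le_trans (Submodule.finrank_mono ?_) (Submodule.finrank_add_le_finrank_add_finrank _ _)
  rintro _ ⟨x, rfl⟩
  exact Submodule.add_mem_sup (LinearMap.mem_range_self _ x) (LinearMap.mem_range_self _ x)

lemma matrix_rank_sum_le {α : Type} (s : Finset α) (f : α → Matrix ι ι K) :
    (∑ i ∈ s, f i).rank ≤ ∑ i ∈ s, (f i).rank := by
  classical
  induction s using Finset.induction with
  | empty => simp
  | insert _ _ h ih =>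
      rw [Finset.sum_insert h, Finset.sum_insert h]
      exact (matrix_rank_add_le _ _).trans (add_le_add_right ih _)

end RankLemmas

/-- **The Croot–Lev–Pach lemma.** Let `F` be a finite field with `q` elements
(`q` a prime power), `P` a polynomial in `n` variables over `F` of total degree at
most `d`, and `M` the `qⁿ × qⁿ` matrix with entries `M x y = P(x + y)`.  Then
`rank M ≤ 2 · m_{⌊d/2⌋}(q, n)`, where `m_k(q, n)` counts the monomials in `n`
variables with individual degrees at most `q - 1` and total degree at most `k`. -/
theorem croot_lev_pach (q n d : ℕ) (hq : IsPrimePow q)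
    (F : Type) [Field F] [Fintype F] (hF : Fintype.card F = q)
    (P : MvPolynomial (Fin n) F) (hP : P.totalDegree ≤ d)
    (M : Matrix (Fin n → F) (Fin n → F) F)
    (hM : ∀ x y, M x y = MvPolynomial.eval (x + y) P) :
    M.rank ≤ 2 * (Finset.univ.filter
      fun e : Fin n → Fin q => ∑ i, (e i : ℕ) ≤ d / 2).card := by
  classical
  have hq2 : 2 ≤ q := by rw [← hF]; exact Fintype.one_lt_card
  set S : Finset (Fin n → Fin q) :=
    Finset.univ.filter (fun e : Fin n → Fin q => ∑ i, (e i : ℕ) ≤ d / 2) with hS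
  set mono : (Fin n → Fin q) → (Fin n → F) → F := fun a x => ∏ i, x i ^ (a i : ℕ) with hmono
  set c : (Fin n → Fin q) → (Fin n → Fin q) → F := fun a b =>
    ∑ e ∈ P.support, P.coeff e * ∏ i,
      (if (a i : ℕ) + (b i : ℕ) = redExp q (e i) then (Nat.choose (redExp q (e i)) (a i) : F)
       else 0) with hc
  -- degree bound on support exponents
  have hlt : ∀ k, redExp q k < q := fun k => by
    have := redExp_le q k hq2; omega
  have hsupp : ∀ e ∈ P.support, (∑ i, e i) ≤ d := by
    intro e he
    refine le_trans ?_ hP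
    have := MvPolynomial.le_totalDegree he
    rwa [Finsupp.sum_fintype _ _ (fun _ => rfl)] at this
  -- the entrywise expansion
  have hMxy : ∀ x y, M x y = ∑ a : Fin n → Fin q, ∑ b : Fin n → Fin q,
      c a b * mono a x * mono b y := by
    intro x y
    rw [hM, MvPolynomial.eval_eq']
    have hstep : ∀ e ∈ P.support, P.coeff e * ∏ i, (x + y) i ^ e i
        = ∑ a : Fin n → Fin q, ∑ b : Fin n → Fin q,
          P.coeff e * ((∏ i, (if (a i : ℕ) + (b i : ℕ) = redExp q (e i)
              then (Nat.choose (redExp q (e i)) (a i) : F) else 0)) *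
            mono a x * mono b y) := by
      intro e _
      have h1 : ∏ i, (x + y) i ^ e i = ∏ i, (x i + y i) ^ redExp q (e i) := by
        apply Finset.prod_congr rfl
        intro i _
        rw [Pi.add_apply]
        exact pow_redExp hF _ _
      rw [h1, multi_expand _ (fun i => hlt (e i)) x y]
      simp only [Finset.mul_sum]
      rfl
    rw [Finset.sum_congr rfl hstep, Finset.sum_comm]
    apply Finset.sum_congr rfl
    intro a _
    rw [Finset.sum_comm]
    apply Finset.sum_congr rfl
    intro b _
    rw [hc, Finset.sum_mul, Finset.sum_mul]
    apply Finset.sum_congr rfl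
    intro e _
    ring
  -- vanishing of coefficients when both halves are large
  have hvanish : ∀ a b : Fin n → Fin q, d / 2 < ∑ i, (a i : ℕ) →
      d / 2 < ∑ i, (b i : ℕ) → c a b = 0 := by
    intro a b ha hb
    apply Finset.sum_eq_zero
    intro e he
    have : ∃ i, (a i : ℕ) + (b i : ℕ) ≠ redExp q (e i) := by
      by_contra h
      push_neg at h
      have h1 : (∑ i, (a i : ℕ)) + ∑ i, (b i : ℕ) = ∑ i, redExp q (e i) := by
        rw [← Finset.sum_add_distrib]
        exact Finset.sum_congr rfl fun i _ => h i
      have h2 : (∑ i, redExp q (e i)) ≤ ∑ i, e i :=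
        Finset.sum_le_sum fun i _ => redExp_le_self q (e i)
      have := hsupp e he
      omega
    obtain ⟨i, hi⟩ := this
    have hz : (∏ i, (if (a i : ℕ) + (b i : ℕ) = redExp q (e i)
        then (Nat.choose (redExp q (e i)) (a i) : F) else 0)) = 0 :=
      Finset.prod_eq_zero (Finset.mem_univ i) (if_neg hi)
    rw [hz, mul_zero]
  -- the two low-rank pieces
  set A : Matrix (Fin n → F) (Fin n → F) F := ∑ a ∈ S,
    Matrix.vecMulVec (mono a) (fun y => ∑ b : Fin n → Fin q, c a b * mono b y) with hA
  set B : Matrix (Fin n → F) (Fin n → F) F := ∑ b ∈ S,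
    Matrix.vecMulVec (fun x => ∑ a ∈ Sᶜ, c a b * mono a x) (mono b) with hB
  have hMAB : M = A + B := by
    ext x y
    rw [Matrix.add_apply, hA, hB, Matrix.sum_apply, Matrix.sum_apply, hMxy]
    simp only [Matrix.vecMulVec_apply]
    have hsplit : (∑ a : Fin n → Fin q, ∑ b : Fin n → Fin q, c a b * mono a x * mono b y)
        = (∑ a ∈ S, ∑ b : Fin n → Fin q, c a b * mono a x * mono b y)
          + ∑ a ∈ Sᶜ, ∑ b : Fin n → Fin q, c a b * mono a x * mono b y := by
      rw [Finset.sum_add_sum_compl]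
    rw [hsplit]
    congr 1
    · apply Finset.sum_congr rfl
      intro a _
      rw [Finset.mul_sum]
      exact Finset.sum_congr rfl fun b _ => by ring
    · have hinner : ∀ a ∈ Sᶜ, (∑ b : Fin n → Fin q, c a b * mono a x * mono b y)
          = ∑ b ∈ S, c a b * mono a x * mono b y := by
        intro a haS
        rw [Finset.mem_compl, hS, Finset.mem_filter] at haS
        push_neg at haS
        have ha : d / 2 < ∑ i, (a i : ℕ) := haS (Finset.mem_univ a)
        symm
        apply Finset.sum_subset (Finset.subset_univ S)
        intro b _ hbS
        rw [hS, Finset.mem_filter] at hbS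
        push_neg at hbS
        have hb : d / 2 < ∑ i, (b i : ℕ) := hbS (Finset.mem_univ b)
        rw [hvanish a b ha hb, zero_mul, zero_mul]
      rw [Finset.sum_congr rfl hinner, Finset.sum_comm]
      apply Finset.sum_congr rfl
      intro b _
      rw [Finset.sum_mul]
  -- rank bound
  rw [hMAB]
  calc (A + B).rank ≤ A.rank + B.rank := matrix_rank_add_le A B
    _ ≤ S.card + S.card := by
        refine add_le_add ?_ ?_
        · refine (matrix_rank_sum_le S _).trans ?_
          calc (∑ a ∈ S, (Matrix.vecMulVec (mono a) _).rank) ≤ ∑ _a ∈ S, 1 :=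
                Finset.sum_le_sum fun a _ => rank_vecMulVec_le_one _ _
            _ = S.card := by simp
        · refine (matrix_rank_sum_le S _).trans ?_
          calc (∑ b ∈ S, (Matrix.vecMulVec _ (mono b)).rank) ≤ ∑ _b ∈ S, 1 :=
                Finset.sum_le_sum fun b _ => rank_vecMulVec_le_one _ _
            _ = S.card := by simp
    _ = 2 * S.card := by ring
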